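/- Let f(w) = (1/2)⟨w, Aw⟩ − ⟨b, w⟩ + c be a quadratic function on ℝⁿ with A symmetric positive definite. Let x ∈ ℝⁿ with g := ∇f(x) ≠ 0, let t := 2‖g‖²/⟨g, Ag⟩, y := x − t·g, and h := ∇f(y). Assume g and h are linearly independent, and define Δ := ⟨h, Ah⟩⟨g, Ag⟩ − ⟨g, Ah⟩², α := (⟨h, g⟩⟨g, Ah⟩ − ⟨g, g⟩⟨h, Ah⟩)/Δ, β := (−⟨h, g⟩⟨g, Ag⟩ + ⟨g, g⟩⟨h, Ag⟩)/Δ, and p := x + α·g + β·h. Then p minimizes f on the two-dimensional affine space Π = { x + α'·g + β'·h : α', β' ∈ ℝ }; that is, f(p) ≤ f(x + α'·g + β'·h) for all α', β' ∈ ℝ. -/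

import Mathlib

open Matrix

/-- With the same setup as Statement 2, the ellipcenter point
`p = x + α·g + β·h` minimizes `f` over the affine plane
`Π = { x + α'·g + β'·h : α', β' ∈ ℝ }`. -/
theorem stmt3 {n : ℕ} (A : Matrix (Fin n) (Fin n) ℝ) (hA : A.PosDef)
    (b : Fin n → ℝ) (c : ℝ) (f : (Fin n → ℝ) → ℝ)
    (hf : ∀ w, f w = (1/2) * (w ⬝ᵥ A.mulVec w) - b ⬝ᵥ w + c)
    (x g : Fin n → ℝ) (hg : g = A.mulVec x - b) (hg0 : g ≠ 0)
    (t : ℝ) (ht : t = 2 * (g ⬝ᵥ g) / (g ⬝ᵥ A.mulVec g))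
    (y : Fin n → ℝ) (hy : y = x - t • g)
    (h : Fin n → ℝ) (hh : h = A.mulVec y - b)
    (hindep : LinearIndependent ℝ ![g, h])
    (Δ α β : ℝ)
    (hΔ : Δ = (h ⬝ᵥ A.mulVec h) * (g ⬝ᵥ A.mulVec g) - (g ⬝ᵥ A.mulVec h) ^ 2)
    (hα : α = ((h ⬝ᵥ g) * (g ⬝ᵥ A.mulVec h) - (g ⬝ᵥ g) * (h ⬝ᵥ A.mulVec h)) / Δ)
    (hβ : β = (-(h ⬝ᵥ g) * (g ⬝ᵥ A.mulVec g) + (g ⬝ᵥ g) * (h ⬝ᵥ A.mulVec g)) / Δ)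
    (p : Fin n → ℝ) (hp : p = x + α • g + β • h) :
    ∀ α' β' : ℝ, f p ≤ f (x + α' • g + β' • h) := by
  classical
  have hAT : Aᵀ = A := by
    have h1 := hA.1
    rwa [Matrix.IsHermitian, conjTranspose_eq_transpose_of_trivial] at h1
  have hsymm : ∀ u v : Fin n → ℝ, u ⬝ᵥ A.mulVec v = v ⬝ᵥ A.mulVec u := by
    intro u v
    rw [dotProduct_mulVec, ← vecMul_transpose, hAT, dotProduct_comm]
  have hposlt : ∀ v : Fin n → ℝ, v ≠ 0 → 0 < v ⬝ᵥ A.mulVec v := by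
    intro v hv
    simpa using hA.dotProduct_mulVec_pos hv
  have hpos : ∀ v : Fin n → ℝ, 0 ≤ v ⬝ᵥ A.mulVec v := by
    intro v
    by_cases hv : v = 0
    · simp [hv]
    · exact (hposlt v hv).le
  set gg := g ⬝ᵥ g with hgg
  set hg' := h ⬝ᵥ g with hhg'
  set Gg := g ⬝ᵥ A.mulVec g with hGg
  set Gh := g ⬝ᵥ A.mulVec h with hGh
  set Hh := h ⬝ᵥ A.mulVec h with hHh
  have hGhs : h ⬝ᵥ A.mulVec g = Gh := hsymm h g
  rw [hGhs] at hβ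
  have hquad : ∀ s r : ℝ, (s • g + r • h) ⬝ᵥ A.mulVec (s • g + r • h)
      = s^2 * Gg + 2*s*r*Gh + r^2 * Hh := by
    intro s r
    simp only [mulVec_add, mulVec_smul, dotProduct_add, add_dotProduct,
      dotProduct_smul, smul_dotProduct, smul_eq_mul, hGhs, ← hGg, ← hGh, ← hHh]
    ring
  have hGgpos : 0 < Gg := hposlt g hg0
  have hΔpos : 0 < Δ := by
    have hv : (-(Gh/Gg)) • g + (1:ℝ) • h ≠ 0 := by
      intro hc
      exact one_ne_zero (LinearIndependent.pair_iff.mp hindep _ _ hc).2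
    have h2 : 0 < (-(Gh/Gg))^2 * Gg + 2*(-(Gh/Gg))*1*Gh + 1^2 * Hh := by
      rw [← hquad]; exact hposlt _ hv
    rw [hΔ]
    have hGg0 : Gg ≠ 0 := ne_of_gt hGgpos
    have : 0 < Hh - Gh^2/Gg := by
      have : (-(Gh/Gg))^2 * Gg + 2*(-(Gh/Gg))*1*Gh + 1^2 * Hh = Hh - Gh^2/Gg := by
        field_simp; ring
      linarith [this ▸ h2]
    calc (0:ℝ) < (Hh - Gh^2/Gg) * Gg := mul_pos this hGgpos
      _ = Hh * Gg - Gh^2 := by field_simp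
  have hΔ0 : Δ ≠ 0 := ne_of_gt hΔpos
  -- normal equations
  have E1 : gg + α * Gg + β * Gh = 0 := by
    rw [hα, hβ]
    field_simp
    linear_combination gg * hΔ
  have E2 : hg' + α * Gh + β * Hh = 0 := by
    rw [hα, hβ]
    field_simp
    linear_combination hg' * hΔ
  -- expansion of f around x
  have hexp : ∀ u : Fin n → ℝ, f (x + u) = f x + u ⬝ᵥ g + (1/2) * (u ⬝ᵥ A.mulVec u) := by
    intro u
    rw [hf, hf]
    have h1 : x ⬝ᵥ A.mulVec u = u ⬝ᵥ A.mulVec x := hsymm x u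
    have h2 : u ⬝ᵥ g = u ⬝ᵥ A.mulVec x - u ⬝ᵥ b := by
      rw [hg, dotProduct_sub]
    simp only [mulVec_add, dotProduct_add, add_dotProduct, h1]
    rw [h2, dotProduct_comm b u]
    ring
  have hval : ∀ s r : ℝ, f (x + s • g + r • h)
      = f x + (s * gg + r * hg') + (1/2) * (s^2 * Gg + 2*s*r*Gh + r^2 * Hh) := by
    intro s r
    have hxu : x + s • g + r • h = x + (s • g + r • h) := by abel
    rw [hxu, hexp, hquad]
    have : (s • g + r • h) ⬝ᵥ g = s * gg + r * hg' := by
      simp only [add_dotProduct, smul_dotProduct, smul_eq_mul, ← hgg, ← hhg']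
    rw [this]
  intro α' β'
  rw [hp, hval α β, hval α' β']
  have key : 0 ≤ (α'-α)^2 * Gg + 2*(α'-α)*(β'-β)*Gh + (β'-β)^2 * Hh := by
    rw [← hquad]; exact hpos _
  have hdiff : (α'*gg + β'*hg' + (1/2)*(α'^2*Gg + 2*α'*β'*Gh + β'^2*Hh))
      - (α*gg + β*hg' + (1/2)*(α^2*Gg + 2*α*β*Gh + β^2*Hh))
      = (1/2)*((α'-α)^2*Gg + 2*(α'-α)*(β'-β)*Gh + (β'-β)^2*Hh)
        + (α'-α)*(gg + α*Gg + β*Gh) + (β'-β)*(hg' + α*Gh + β*Hh) := by ring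
  rw [E1, E2] at hdiff
  linarith [key, hdiff]
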